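/- Let v : G → ℝ≥0 be additive over a finite linearly ordered set G sorted by non-increasing v, and let S, S' ⊆ G be such that S' = {j'_1 ≺ j'_2 ≺ ⋯ ≺ j'_q} and S = {j_1 ≺ ⋯ ≺ j_r} with r ≥ q − 1 and j_t ⪯ j'_{t+1} (j_t comes no later than j'_{t+1} in the order) for all 1 ≤ t ≤ q−1. Then v(S' \ {j'_1}) ≤ v(S). -/
import Mathlib

open Finset

/-- If `S = {j_1 ≺ ⋯ ≺ j_r}` and `S' = {j'_1 ≺ ⋯ ≺ j'_q}` (listed in the
value order, earlier items having weakly larger value), `r ≥ q − 1`, and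
`j_t ⪯ j'_{t+1}` for all `1 ≤ t ≤ q−1`, then `v(S' \ {j'_1}) ≤ v(S)`. -/
theorem dominate_after_removal {G : Type*} [LinearOrder G]
    (v : G → ℝ) (hv0 : ∀ j, 0 ≤ v j)
    (hv : ∀ j j' : G, j ≤ j' → v j' ≤ v j)
    (q r : ℕ) (j' : ℕ → G) (j : ℕ → G)
    (hj'mono : ∀ t, t + 1 < q → j' t < j' (t + 1))
    (hjmono : ∀ t, t + 1 < r → j t < j (t + 1))
    (hr : q - 1 ≤ r)
    (hdom : ∀ t, t + 1 < q → j t ≤ j' (t + 1)) :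
    ∑ t ∈ Finset.Ico 1 q, v (j' t) ≤ ∑ t ∈ Finset.range r, v (j t) := by
  have h1 : ∑ t ∈ Finset.Ico 1 q, v (j' t)
      = ∑ t ∈ Finset.range (q - 1), v (j' (t + 1)) := by
    rw [Finset.sum_Ico_eq_sum_range]
    simp [add_comm]
  rw [h1]
  calc ∑ t ∈ Finset.range (q - 1), v (j' (t + 1))
      ≤ ∑ t ∈ Finset.range (q - 1), v (j t) := by
        apply Finset.sum_le_sum
        intro i hi
        exact hv _ _ (hdom i (by simp at hi; omega))
    _ ≤ ∑ t ∈ Finset.range r, v (j t) :=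
        Finset.sum_le_sum_of_subset_of_nonneg
          (by intro x hx; simp at hx ⊢; omega) (fun i _ _ => hv0 _)
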